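/- Let (a_n)_{n≥0}, (b_n)_{n≥0}, and (τ_n)_{n≥0} be sequences of real numbers and r a real number such that: a_k ≥ 0 and b_k ≥ 0 for all k, a_{k+1} ≤ r·a_k + b_k for all k, 0 < r < 1, and (τ_n) is nonincreasing with 0 ≤ τ_{k+1} ≤ τ_k ≤ 1 for all k ≥ 0. Then for every K ≥ 0, Σ_{k=0}^{K} τ_k·a_k ≤ (1/(1−r))·(τ_0·a_0 + Σ_{k=0}^{K} τ_k·b_k). -/
import Mathlib


theorem weighted_sum_recursion_bound (a b τ : ℕ → ℝ) (r : ℝ)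
    (ha : ∀ k, 0 ≤ a k) (hb : ∀ k, 0 ≤ b k)
    (hrec : ∀ k, a (k + 1) ≤ r * a k + b k)
    (hr0 : 0 < r) (hr1 : r < 1)
    (hτ0 : ∀ k, 0 ≤ τ k) (hτmono : ∀ k, τ (k + 1) ≤ τ k) (hτ1 : ∀ k, τ k ≤ 1) :
    ∀ K, ∑ k ∈ Finset.range (K + 1), τ k * a k ≤
      (1 / (1 - r)) * (τ 0 * a 0 + ∑ k ∈ Finset.range (K + 1), τ k * b k) := by
  intro K
  set S := ∑ k ∈ Finset.range (K + 1), τ k * a k with hS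
  set B := ∑ k ∈ Finset.range (K + 1), τ k * b k with hB
  have hterm : ∀ k, 0 ≤ τ k * a k := fun k => mul_nonneg (hτ0 k) (ha k)
  have key : S ≤ τ 0 * a 0 + r * S + B := by
    have h1 : S = (∑ k ∈ Finset.range K, τ (k + 1) * a (k + 1)) + τ 0 * a 0 := by
      rw [hS, Finset.sum_range_succ']
    have h2 : ∑ k ∈ Finset.range K, τ (k + 1) * a (k + 1) ≤
        ∑ k ∈ Finset.range K, (r * (τ k * a k) + τ k * b k) := by
      apply Finset.sum_le_sum
      intro k _
      have h3 : τ (k + 1) * a (k + 1) ≤ τ (k + 1) * (r * a k + b k) :=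
        mul_le_mul_of_nonneg_left (hrec k) (hτ0 _)
      have h4 : τ (k + 1) * (r * a k + b k) ≤ r * (τ k * a k) + τ k * b k := by
        nlinarith [mul_nonneg (mul_nonneg (sub_nonneg.mpr (hτmono k)) hr0.le) (ha k),
          mul_nonneg (sub_nonneg.mpr (hτmono k)) (hb k)]
      linarith
    rw [Finset.sum_add_distrib, ← Finset.mul_sum] at h2
    have h5 : ∑ k ∈ Finset.range K, τ k * a k ≤ S := by
      rw [hS, Finset.sum_range_succ]; nlinarith [hterm K]
    have h6 : ∑ k ∈ Finset.range K, τ k * b k ≤ B := by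
      rw [hB, Finset.sum_range_succ]; nlinarith [mul_nonneg (hτ0 K) (hb K)]
    nlinarith [h2, h5, h6, hr0.le,
      mul_le_mul_of_nonneg_left h5 hr0.le]
  have h1r : 0 < 1 - r := by linarith
  rw [div_mul_eq_mul_div, le_div_iff₀ h1r]
  nlinarith [key]
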